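/- Let S be a finite nonempty subset of {0,1}^n, let v(α) be the vector of evaluations at α of all monomials of degree at most d (of which there are N ≤ (n+1)^d), and let M = E_{α∈S}[v(α)v(α)^T] denote the moment matrix (expectation over uniform distribution on S). Then every nonzero eigenvalue of M is at least (|S|·N)^{−N} ≥ 2^{−poly(n^d)}; in particular 1/δ ≤ (2^n · N)^N where δ is the least nonzero eigenvalue. -/

import Mathlib

/-- Index type for the monomials of degree at most d in n variables. -/
def MonIdx (n d : ℕ) : Type := {m : Fin n → ℕ // ∑ i, m i ≤ d}

instance (n d : ℕ) : DecidableEq (MonIdx n d) :=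
  fun a b => decidable_of_iff (a.1 = b.1) Subtype.ext_iff.symm

noncomputable instance (n d : ℕ) : Fintype (MonIdx n d) := by
  have h : Finite (MonIdx n d) := by
    apply Finite.of_injective
      (fun m : MonIdx n d => fun i : Fin n =>
        (⟨m.1 i, Nat.lt_succ_of_le (le_trans (Finset.single_le_sum
          (fun j _ => Nat.zero_le (m.1 j)) (Finset.mem_univ i)) m.2)⟩ : Fin (d + 1)))
    intro a b hab
    apply Subtype.ext
    funext i
    exact congrArg Fin.val (congrFun hab i)
  exact Fintype.ofFinite _

/-- The vector of evaluations at x of all monomials of degree at most d. -/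
def monVec (n d : ℕ) (x : Fin n → ℝ) : MonIdx n d → ℝ :=
  fun m => ∏ i, x i ^ m.1 i

open Polynomial in
lemma my_charpoly_diag {ι : Type*} [Fintype ι] [DecidableEq ι] (v : ι → ℝ) :
    (Matrix.diagonal v).charpoly = ∏ i, (X - C (v i)) := by
  have h : Matrix.charmatrix (Matrix.diagonal v)
      = Matrix.diagonal (fun i => (X : ℝ[X]) - C (v i)) := by
    ext i j
    by_cases h : i = j
    · subst h; simp
    · simp [Matrix.charmatrix_apply, Matrix.diagonal_apply_ne _ h]
  rw [Matrix.charpoly, h, Matrix.det_diagonal]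

open Polynomial in
lemma my_charpoly_conj {ι : Type*} [Fintype ι] [DecidableEq ι]
    (U : Matrix.unitaryGroup ι ℝ) (D : Matrix ι ι ℝ) :
    ((U : Matrix ι ι ℝ) * D * star (U : Matrix ι ι ℝ)).charpoly = D.charpoly := by
  set P : Matrix ι ι ℝ := (U : Matrix ι ι ℝ) with hP
  set Q : Matrix ι ι ℝ := star (U : Matrix ι ι ℝ) with hQ
  have hPQ : P * Q = 1 := Matrix.mem_unitaryGroup_iff.mp U.2
  set f : Matrix ι ι ℝ →+* Matrix ι ι ℝ[X] := (C : ℝ →+* ℝ[X]).mapMatrix with hf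
  have hcomm : f P * Matrix.scalar ι (X : ℝ[X]) = Matrix.scalar ι (X : ℝ[X]) * f P :=
    (Matrix.scalar_commute (X : ℝ[X]) (fun r => Commute.all _ r) (f P)).symm
  have key : f P * Matrix.charmatrix D * f Q = Matrix.charmatrix (P * D * Q) := by
    show f P * (Matrix.scalar ι (X : ℝ[X]) - (C : ℝ →+* ℝ[X]).mapMatrix D) * f Q
        = Matrix.scalar ι (X : ℝ[X]) - (C : ℝ →+* ℝ[X]).mapMatrix (P * D * Q)
    have : (C : ℝ →+* ℝ[X]).mapMatrix D = f D := rfl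
    rw [this, mul_sub, sub_mul, hcomm, mul_assoc, ← map_mul, hPQ, map_one, mul_one]
    congr 1
    rw [← map_mul, ← map_mul]
  have h1 : (f P).det * (f Q).det = 1 := by
    rw [← Matrix.det_mul, ← map_mul, hPQ, map_one, Matrix.det_one]
  have : ((P * D * Q).charmatrix).det = ((D.charmatrix).det) := by
    rw [← key, Matrix.det_mul, Matrix.det_mul]
    calc (f P).det * (D.charmatrix).det * (f Q).det
        = (D.charmatrix).det * ((f P).det * (f Q).det) := by ring
      _ = (D.charmatrix).det := by rw [h1, mul_one]
  exact this

open Polynomial Matrix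

/-- For a nonempty S ⊆ {0,1}^n, the moment matrix M = E_{α∈S}[v(α)v(α)ᵀ] of the
monomials of degree at most d (N of them) has every nonzero eigenvalue at least
(|S|·N)^{−N}; in particular, since |S| ≤ 2^n, at least (2^n·N)^{−N}. -/
theorem stmt_19 (n d : ℕ) (S : Finset (Fin n → ℝ)) (hS : S.Nonempty)
    (hS01 : ∀ x ∈ S, ∀ i, x i = 0 ∨ x i = 1)
    (M : Matrix (MonIdx n d) (MonIdx n d) ℝ)
    (hMdef : M = (S.card : ℝ)⁻¹ •
      ∑ x ∈ S, Matrix.vecMulVec (monVec n d x) (monVec n d x))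
    (hM : M.IsHermitian) :
    ∀ i, hM.eigenvalues i ≠ 0 →
      ((S.card : ℝ) * (Fintype.card (MonIdx n d) : ℝ)) ^ (-(Fintype.card (MonIdx n d) : ℤ))
        ≤ hM.eigenvalues i ∧
      ((2 ^ n : ℝ) * (Fintype.card (MonIdx n d) : ℝ)) ^ (-(Fintype.card (MonIdx n d) : ℤ))
        ≤ hM.eigenvalues i := by
  classical
  intro i hi
  set N := Fintype.card (MonIdx n d) with hNdef
  have hN1 : 1 ≤ N := Fintype.card_pos_iff.mpr ⟨⟨fun _ => 0, by simp⟩⟩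
  have hNR : (1:ℝ) ≤ (N:ℝ) := by exact_mod_cast hN1
  have hc0 : 0 < S.card := Finset.card_pos.mpr hS
  set c : ℝ := (S.card : ℝ) with hcdef
  have hc : 0 < c := Nat.cast_pos.mpr hc0
  have hc1 : 1 ≤ c := Nat.one_le_cast.mpr hc0
  set v := monVec n d with hv
  -- monomial values are 0 or 1
  have hv01 : ∀ x ∈ S, ∀ m : MonIdx n d, v x m = 0 ∨ v x m = 1 := by
    intro x hx m
    have hfac : ∀ j : Fin n, x j ^ m.1 j = 0 ∨ x j ^ m.1 j = 1 := by
      intro j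
      rcases hS01 x hx j with h | h
      · rcases Nat.eq_zero_or_pos (m.1 j) with h0 | h0
        · right; rw [h0, pow_zero]
        · left; rw [h, zero_pow (Nat.pos_iff_ne_zero.mp h0)]
      · right; rw [h, one_pow]
    show (∏ j, x j ^ m.1 j) = 0 ∨ (∏ j, x j ^ m.1 j) = 1
    by_cases hall : ∀ j ∈ Finset.univ, x j ^ m.1 j = 1
    · right; exact Finset.prod_eq_one hall
    · left
      push_neg at hall
      obtain ⟨j, -, hj⟩ := hall
      exact Finset.prod_eq_zero (Finset.mem_univ j) ((hfac j).resolve_right hj)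
  set A : Matrix (MonIdx n d) (MonIdx n d) ℝ := c • M with hA
  have hAsum : A = ∑ x ∈ S, Matrix.vecMulVec (v x) (v x) := by
    rw [hA, hMdef, smul_smul, mul_inv_cancel₀ (ne_of_gt hc), one_smul]
  -- M is positive semidefinite
  have hpsd1 : ∀ w : MonIdx n d → ℝ, (Matrix.vecMulVec w w).PosSemidef := by
    intro w
    have h1 : Matrix.vecMulVec w w = (Matrix.replicateRow Unit w)ᴴ * Matrix.replicateRow Unit w := by
      rw [Matrix.conjTranspose_replicateRow, star_trivial, ← Matrix.vecMulVec_eq Unit]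
    rw [h1]
    exact Matrix.posSemidef_conjTranspose_mul_self _
  have hsumPSD : (∑ x ∈ S, Matrix.vecMulVec (v x) (v x)).PosSemidef :=
    Finset.sum_induction _ Matrix.PosSemidef (fun a b ha hb => ha.add hb)
      Matrix.PosSemidef.zero (fun x _ => hpsd1 (v x))
  have hMpsd : M.PosSemidef := by
    refine Matrix.posSemidef_iff_dotProduct_mulVec.mpr ⟨hM, fun y => ?_⟩
    rw [hMdef, Matrix.smul_mulVec, dotProduct_smul, smul_eq_mul]
    exact mul_nonneg (inv_nonneg.mpr hc.le) ((Matrix.posSemidef_iff_dotProduct_mulVec.mp hsumPSD).2 y)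
  set lam : MonIdx n d → ℝ := hM.eigenvalues with hlam
  have hlam0 : ∀ j, 0 ≤ lam j := fun j => hMpsd.eigenvalues_nonneg j
  set μ : MonIdx n d → ℝ := fun j => c * lam j with hmu
  have hmu0 : ∀ j, 0 ≤ μ j := fun j => mul_nonneg hc.le (hlam0 j)
  -- spectral decomposition of A
  set U := hM.eigenvectorUnitary with hU
  have hdiag : c • Matrix.diagonal (RCLike.ofReal ∘ lam) = Matrix.diagonal μ := by
    rw [← Matrix.diagonal_smul]
    congr 1
  have hAspec : A = (U : Matrix (MonIdx n d) (MonIdx n d) ℝ) * Matrix.diagonal μ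
      * star (U : Matrix (MonIdx n d) (MonIdx n d) ℝ) := by
    rw [hA, hM.spectral_theorem, Unitary.conjStarAlgAut_apply, ← hdiag, mul_smul_comm, smul_mul_assoc]
  have hchar : A.charpoly = ∏ j, (X - C (μ j)) := by
    rw [hAspec, my_charpoly_conj, my_charpoly_diag]
  -- A has integer entries
  set Az : Matrix (MonIdx n d) (MonIdx n d) ℤ :=
    fun m m' => (((S.filter (fun x => v x m * v x m' = 1)).card : ℤ)) with hAz
  have hAmap : A = Az.map (Int.castRingHom ℝ) := by
    funext m m'
    have hAentry : A m m' = ∑ x ∈ S, v x m * v x m' := by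
      rw [hAsum]
      simp [Matrix.sum_apply, Matrix.vecMulVec_apply]
    have hcongr : ∀ x ∈ S, v x m * v x m' = if v x m * v x m' = 1 then (1:ℝ) else 0 := by
      intro x hx
      rcases hv01 x hx m with h | h <;> rcases hv01 x hx m' with h' | h' <;> simp [h, h']
    rw [Matrix.map_apply, hAentry, Finset.sum_congr rfl hcongr, Finset.sum_boole]
    simp [hAz]
  have hcharmap : A.charpoly = (Az.charpoly).map (Int.castRingHom ℝ) := by
    rw [hAmap, Matrix.charpoly_map]
  -- trace bound
  have htrA1 : A.trace = ∑ j, μ j := by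
    rw [hAspec, Matrix.trace_mul_cycle,
      Matrix.mem_unitaryGroup_iff'.mp U.2, Matrix.one_mul, Matrix.trace_diagonal]
  have htrA2 : A.trace ≤ c * N := by
    rw [hAsum, Matrix.trace_sum]
    calc ∑ x ∈ S, (Matrix.vecMulVec (v x) (v x)).trace
        ≤ ∑ _x ∈ S, (N : ℝ) := by
          apply Finset.sum_le_sum
          intro x hx
          rw [Matrix.trace]
          calc ∑ m, (Matrix.vecMulVec (v x) (v x)).diag m
              ≤ ∑ _m : MonIdx n d, (1:ℝ) := by
                apply Finset.sum_le_sum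
                intro m _
                rcases hv01 x hx m with h | h <;>
                  simp [Matrix.diag, Matrix.vecMulVec_apply, h]
            _ = (N : ℝ) := by simp [hNdef]
      _ = c * N := by rw [Finset.sum_const, nsmul_eq_mul]
  have htrace : ∑ j, μ j ≤ c * N := htrA1 ▸ htrA2
  have hub : ∀ j, μ j ≤ c * N := fun j =>
    le_trans (Finset.single_le_sum (fun j _ => hmu0 j) (Finset.mem_univ j)) htrace
  -- the product of nonzero eigenvalues is at least 1
  set T : Finset (MonIdx n d) := Finset.univ.filter (fun j => ¬ lam j = 0) with hT
  set Z : Finset (MonIdx n d) := Finset.univ.filter (fun j => lam j = 0) with hZ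
  have hmupos : ∀ j ∈ T, 0 < μ j := fun j hj =>
    mul_pos hc (lt_of_le_of_ne (hlam0 j) (Ne.symm (Finset.mem_filter.mp hj).2))
  have hprodpos : 0 < ∏ j ∈ T, μ j := Finset.prod_pos hmupos
  have hsplit : (∏ j, (X - C (μ j) : ℝ[X])) = X ^ Z.card * ∏ j ∈ T, (X - C (μ j)) := by
    rw [← Finset.prod_filter_mul_prod_filter_not Finset.univ (fun j => lam j = 0)]
    congr 1
    rw [Finset.prod_congr rfl (fun j hj => ?_), Finset.prod_const]
    have : lam j = 0 := (Finset.mem_filter.mp hj).2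
    simp [hmu, this]
  have hcoeff : (A.charpoly).coeff Z.card = ∏ j ∈ T, (-(μ j)) := by
    rw [hchar, hsplit]
    have h0 : ((X:ℝ[X]) ^ Z.card * ∏ j ∈ T, (X - C (μ j))).coeff (0 + Z.card)
        = (∏ j ∈ T, ((X:ℝ[X]) - C (μ j))).coeff 0 := Polynomial.coeff_X_pow_mul _ _ _
    rw [zero_add] at h0
    rw [h0, Polynomial.coeff_zero_eq_eval_zero, Polynomial.eval_prod]
    exact Finset.prod_congr rfl fun j _ => by simp
  have habs : |(A.charpoly).coeff Z.card| = ∏ j ∈ T, μ j := by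
    rw [hcoeff, Finset.abs_prod]
    exact Finset.prod_congr rfl fun j hj => by rw [abs_neg, abs_of_pos (hmupos j hj)]
  have hzcast : (A.charpoly).coeff Z.card = ((Az.charpoly.coeff Z.card : ℤ) : ℝ) := by
    rw [hcharmap, Polynomial.coeff_map, eq_intCast]
  have hz0 : Az.charpoly.coeff Z.card ≠ 0 := by
    intro h0
    rw [h0] at hzcast
    rw [hzcast] at habs
    simp at habs
    linarith [hprodpos]
  have hprod1 : 1 ≤ ∏ j ∈ T, μ j := by
    rw [← habs, hzcast]
    rw [← Int.cast_abs]
    exact_mod_cast Int.one_le_abs hz0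
  -- conclude
  have hiT : i ∈ T := Finset.mem_filter.mpr ⟨Finset.mem_univ i, hi⟩
  have hcN0 : 0 < c * N := mul_pos hc (lt_of_lt_of_le one_pos hNR)
  have hcN1 : 1 ≤ c * N := one_le_mul_of_one_le_of_one_le hc1 hNR
  have hstep : 1 ≤ μ i * (c*N)^(N-1) := by
    calc (1:ℝ) ≤ ∏ j ∈ T, μ j := hprod1
      _ = μ i * ∏ j ∈ T.erase i, μ j := (Finset.mul_prod_erase T μ hiT).symm
      _ ≤ μ i * (c*N)^(N-1) := by
          apply mul_le_mul_of_nonneg_left _ (hmu0 i)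
          calc ∏ j ∈ T.erase i, μ j
              ≤ ∏ _j ∈ T.erase i, (c*N) := by
                apply Finset.prod_le_prod (fun j _ => hmu0 j) (fun j _ => hub j)
            _ = (c*N)^(T.erase i).card := by rw [Finset.prod_const]
            _ ≤ (c*N)^(N-1) := by
                apply pow_le_pow_right₀ hcN1
                rw [Finset.card_erase_of_mem hiT]
                exact Nat.sub_le_sub_right (Finset.card_le_univ T) 1
  have hkey : 1 ≤ lam i * (c * N)^N := by
    have h2 : μ i * (c*N)^(N-1) = lam i * (c * (c*N)^(N-1)) := by rw [hmu]; ring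
    have h3 : c * (c*N)^(N-1) ≤ (c*N)^N := by
      have hpow : (c*N)^N = (c*N) * (c*N)^(N-1) := by
        rw [← pow_succ']
        congr 1
        omega
      rw [hpow]
      exact mul_le_mul_of_nonneg_right (le_mul_of_one_le_right hc.le hNR)
        (pow_nonneg hcN0.le _)
    calc (1:ℝ) ≤ μ i * (c*N)^(N-1) := hstep
      _ = lam i * (c * (c*N)^(N-1)) := h2
      _ ≤ lam i * (c*N)^N := mul_le_mul_of_nonneg_left h3 (hlam0 i)
  have goal1 : (c * N) ^ (-(N:ℤ)) ≤ lam i := by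
    rw [_root_.zpow_neg, zpow_natCast, inv_eq_one_div, div_le_iff₀ (pow_pos hcN0 N)]
    linarith [hkey]
  refine ⟨goal1, ?_⟩
  -- |S| ≤ 2^n
  have hcard : S.card ≤ 2^n := by
    have hinj : S.card ≤ Fintype.card (Fin n → Bool) := by
      apply Finset.card_le_card_of_injOn (fun x i => if x i = 1 then true else false)
        (fun x _ => Finset.mem_univ _)
      intro x hx y hy hxy
      funext j
      have hthis := congrFun hxy j
      rcases hS01 x hx j with h | h <;> rcases hS01 y hy j with h' | h'
      · rw [h, h']
      · exfalso; simp [h, h'] at hthis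
      · exfalso; simp [h, h'] at hthis
      · rw [h, h']
    simpa using hinj
  have hcle : c ≤ (2:ℝ)^n := by
    rw [hcdef]
    exact_mod_cast hcard
  have hcN2 : (c*N)^N ≤ ((2:ℝ)^n * N)^N :=
    pow_le_pow_left₀ hcN0.le (mul_le_mul_of_nonneg_right hcle (Nat.cast_nonneg N)) N
  have goal2 : ((2:ℝ)^n * N) ^ (-(N:ℤ)) ≤ (c * N) ^ (-(N:ℤ)) := by
    rw [_root_.zpow_neg, zpow_natCast, _root_.zpow_neg, zpow_natCast]
    exact inv_anti₀ (pow_pos hcN0 N) hcN2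
  exact le_trans goal2 goal1
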